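/- Let T be a commutative monad on a cartesian category A such that Alg(T) is symmetric monoidal with the free functor strong monoidal (via ξ : TX ⊗ TY ≅ T(X × Y)). Every T̄-coalgebra b : X → TX on an algebra a : TX → X induces a commutative comonoid structure on X in Alg(T), with counit u_b = T(!) ∘ b : X → T(1) and comultiplication d_b = (a ⊗ a) ∘ ξ⁻¹ ∘ T(Δ) ∘ b : X → X ⊗ X. In particular (counit law): (u_b ⊗ id) ∘ d_b = λ⁻¹ : X → I ⊗ X. -/

import Mathlib

open CategoryTheory CategoryTheory.Limits CategoryTheory.MonoidalCategory

set_option maxHeartbeats 1000000 in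
theorem bases_as_coalgebras_aux {A : Type u} [Category.{v} A]
    [HasFiniteProducts A] (T : Monad A)
    [MonoidalCategory T.Algebra] [SymmetricCategory T.Algebra]
    (ξ : ∀ P Q : A, T.free.obj P ⊗ T.free.obj Q ≅ T.free.obj (P ⨯ Q))
    (ι : 𝟙_ T.Algebra ≅ T.free.obj (⊤_ A))
    (hnat : ∀ {P P' Q Q' : A} (f : P ⟶ P') (g : Q ⟶ Q'),
      (T.free.map f ⊗ₘ T.free.map g) ≫ (ξ P' Q').hom =
        (ξ P Q).hom ≫ T.free.map (prod.map f g))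
    (hleft : ∀ P : A,
      (ι.hom ⊗ₘ 𝟙 (T.free.obj P)) ≫ (ξ (⊤_ A) P).hom =
        (λ_ (T.free.obj P)).hom ≫ T.free.map (prod.leftUnitor P).inv)
    (hright : ∀ P : A,
      (𝟙 (T.free.obj P) ⊗ₘ ι.hom) ≫ (ξ P (⊤_ A)).hom =
        (ρ_ (T.free.obj P)).hom ≫ T.free.map (prod.rightUnitor P).inv)
    (hassoc : ∀ P Q R : A,
      ((ξ P Q).hom ⊗ₘ 𝟙 (T.free.obj R)) ≫ (ξ (P ⨯ Q) R).hom ≫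
          T.free.map (prod.associator P Q R).hom =
        (α_ (T.free.obj P) (T.free.obj Q) (T.free.obj R)).hom ≫
          (𝟙 (T.free.obj P) ⊗ₘ (ξ Q R).hom) ≫ (ξ P (Q ⨯ R)).hom)
    (hsymm : ∀ P Q : A,
      (β_ (T.free.obj P) (T.free.obj Q)).hom ≫ (ξ Q P).hom =
        (ξ P Q).hom ≫ T.free.map (prod.braiding P Q).hom)
    (X : T.Algebra) (b : X ⟶ T.free.obj X.A) (bf : X.A ⟶ T.obj X.A) (η' : X.A ⟶ T.obj X.A)
    (ε : T.free.obj X.A ⟶ X) (εF : T.free.obj (T.obj X.A) ⟶ T.free.obj X.A)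
    (hcounit : b ≫ ε = 𝟙 X)
    (hcoassoc : b ≫ T.free.map bf = b ≫ T.free.map η')
    (hba : bf ≫ X.a = 𝟙 X.A) (hηa : η' ≫ X.a = 𝟙 X.A)
    (hεb : ε ≫ b = T.free.map bf ≫ εF)
    (htri : T.free.map η' ≫ εF = 𝟙 (T.free.obj X.A)) :
    letI d : X ⟶ X ⊗ X :=
      b ≫ T.free.map (diag X.A) ≫ (ξ X.A X.A).inv ≫ (ε ⊗ₘ ε)
    letI u : X ⟶ 𝟙_ T.Algebra :=
      b ≫ T.free.map (terminal.from X.A) ≫ ι.inv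
    (d ≫ (u ⊗ₘ 𝟙 X) = (λ_ X).inv) ∧
    (d ≫ (𝟙 X ⊗ₘ u) = (ρ_ X).inv) ∧
    (d ≫ (d ⊗ₘ 𝟙 X) ≫ (α_ X X X).hom = d ≫ (𝟙 X ⊗ₘ d)) ∧
    (d ≫ (β_ X X).hom = d) := by
  have hcid : ε ≫ 𝟙 X = ε := Category.comp_id _
  have hcounitFx : b ≫ ε = 𝟙 X := hcounit
  -- inverse forms of the coherence hypotheses
  have hnat_inv : ∀ {P P' Q Q' : A} (f : P ⟶ P') (g : Q ⟶ Q'),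
      (ξ P Q).inv ≫ (T.free.map f ⊗ₘ T.free.map g) =
        T.free.map (prod.map f g) ≫ (ξ P' Q').inv := by
    intro P P' Q Q' f g
    rw [Iso.inv_comp_eq, ← Category.assoc, ← hnat f g, Category.assoc, Iso.hom_inv_id,
      Category.comp_id]
  have hleft_inv : ∀ P : A,
      (ξ (⊤_ A) P).inv ≫ (ι.inv ⊗ₘ 𝟙 (T.free.obj P)) =
        T.free.map (prod.leftUnitor P).hom ≫ (λ_ (T.free.obj P)).inv := by
    intro P
    have e1 : (ι.inv ⊗ₘ 𝟙 (T.free.obj P)) ≫ (ι.hom ⊗ₘ 𝟙 (T.free.obj P)) = 𝟙 _ := by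
      rw [tensorHom_comp_tensorHom, Iso.inv_hom_id, Category.comp_id, id_tensorHom_id]
    have e2 : (ι.inv ⊗ₘ 𝟙 (T.free.obj P)) ≫ (λ_ (T.free.obj P)).hom =
        (ξ (⊤_ A) P).hom ≫ T.free.map (prod.leftUnitor P).hom := by
      rw [show (λ_ (T.free.obj P)).hom =
          (ι.hom ⊗ₘ 𝟙 (T.free.obj P)) ≫ (ξ (⊤_ A) P).hom ≫
            T.free.map (prod.leftUnitor P).hom from by
        rw [← Category.assoc, hleft P, Category.assoc, ← T.free.map_comp, Iso.inv_hom_id,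
          T.free.map_id, Category.comp_id]]
      rw [← Category.assoc, e1, Category.id_comp]
    calc (ξ (⊤_ A) P).inv ≫ (ι.inv ⊗ₘ 𝟙 (T.free.obj P))
        = (ξ (⊤_ A) P).inv ≫ ((ι.inv ⊗ₘ 𝟙 (T.free.obj P)) ≫ (λ_ (T.free.obj P)).hom) ≫
            (λ_ (T.free.obj P)).inv := by
          rw [Category.assoc, Iso.hom_inv_id, Category.comp_id]
      _ = T.free.map (prod.leftUnitor P).hom ≫ (λ_ (T.free.obj P)).inv := by
          rw [e2, ← Category.assoc, ← Category.assoc, Iso.inv_hom_id, Category.id_comp]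
  have hright_inv : ∀ P : A,
      (ξ P (⊤_ A)).inv ≫ (𝟙 (T.free.obj P) ⊗ₘ ι.inv) =
        T.free.map (prod.rightUnitor P).hom ≫ (ρ_ (T.free.obj P)).inv := by
    intro P
    have e1 : (𝟙 (T.free.obj P) ⊗ₘ ι.inv) ≫ (𝟙 (T.free.obj P) ⊗ₘ ι.hom) = 𝟙 _ := by
      rw [tensorHom_comp_tensorHom, Iso.inv_hom_id, Category.comp_id, id_tensorHom_id]
    have e2 : (𝟙 (T.free.obj P) ⊗ₘ ι.inv) ≫ (ρ_ (T.free.obj P)).hom =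
        (ξ P (⊤_ A)).hom ≫ T.free.map (prod.rightUnitor P).hom := by
      rw [show (ρ_ (T.free.obj P)).hom =
          (𝟙 (T.free.obj P) ⊗ₘ ι.hom) ≫ (ξ P (⊤_ A)).hom ≫
            T.free.map (prod.rightUnitor P).hom from by
        rw [← Category.assoc, hright P, Category.assoc, ← T.free.map_comp, Iso.inv_hom_id,
          T.free.map_id, Category.comp_id]]
      rw [← Category.assoc, e1, Category.id_comp]
    calc (ξ P (⊤_ A)).inv ≫ (𝟙 (T.free.obj P) ⊗ₘ ι.inv)
        = (ξ P (⊤_ A)).inv ≫ ((𝟙 (T.free.obj P) ⊗ₘ ι.inv) ≫ (ρ_ (T.free.obj P)).hom) ≫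
            (ρ_ (T.free.obj P)).inv := by
          rw [Category.assoc, Iso.hom_inv_id, Category.comp_id]
      _ = T.free.map (prod.rightUnitor P).hom ≫ (ρ_ (T.free.obj P)).inv := by
          rw [e2, ← Category.assoc, ← Category.assoc, Iso.inv_hom_id, Category.id_comp]
  have hsymm_inv : ∀ P Q : A,
      (ξ P Q).inv ≫ (β_ (T.free.obj P) (T.free.obj Q)).hom =
        T.free.map (prod.braiding P Q).hom ≫ (ξ Q P).inv := by
    intro P Q
    rw [Iso.inv_comp_eq, ← Category.assoc, ← hsymm P Q, Category.assoc, Iso.hom_inv_id,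
      Category.comp_id]
  have hassoc_inv : ∀ P Q R : A,
      (ξ (P ⨯ Q) R).inv ≫ ((ξ P Q).inv ⊗ₘ 𝟙 (T.free.obj R)) ≫
          (α_ (T.free.obj P) (T.free.obj Q) (T.free.obj R)).hom =
        T.free.map (prod.associator P Q R).hom ≫ (ξ P (Q ⨯ R)).inv ≫
          (𝟙 (T.free.obj P) ⊗ₘ (ξ Q R).inv) := by
    intro P Q R
    have e1 : ((ξ P Q).hom ⊗ₘ 𝟙 (T.free.obj R)) ≫ ((ξ P Q).inv ⊗ₘ 𝟙 (T.free.obj R)) = 𝟙 _ := by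
      rw [tensorHom_comp_tensorHom, Iso.hom_inv_id, Category.comp_id, id_tensorHom_id]
    have e2 : (𝟙 (T.free.obj P) ⊗ₘ (ξ Q R).hom) ≫ (𝟙 (T.free.obj P) ⊗ₘ (ξ Q R).inv) = 𝟙 _ := by
      rw [tensorHom_comp_tensorHom, Iso.hom_inv_id, Category.comp_id, id_tensorHom_id]
    rw [← cancel_epi ((ξ (P ⨯ Q) R).hom), ← cancel_epi ((ξ P Q).hom ⊗ₘ 𝟙 (T.free.obj R))]
    calc ((ξ P Q).hom ⊗ₘ 𝟙 (T.free.obj R)) ≫ (ξ (P ⨯ Q) R).hom ≫ (ξ (P ⨯ Q) R).inv ≫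
          ((ξ P Q).inv ⊗ₘ 𝟙 (T.free.obj R)) ≫
          (α_ (T.free.obj P) (T.free.obj Q) (T.free.obj R)).hom
        = (α_ (T.free.obj P) (T.free.obj Q) (T.free.obj R)).hom := by
          rw [Iso.hom_inv_id_assoc, ← Category.assoc, e1, Category.id_comp]
      _ = ((ξ P Q).hom ⊗ₘ 𝟙 (T.free.obj R)) ≫ (ξ (P ⨯ Q) R).hom ≫
            T.free.map (prod.associator P Q R).hom ≫ (ξ P (Q ⨯ R)).inv ≫
            (𝟙 (T.free.obj P) ⊗ₘ (ξ Q R).inv) := by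
          rw [reassoc_of% (hassoc P Q R), Iso.hom_inv_id_assoc, e2, Category.comp_id]
  -- the "coalgebra absorption" lemmas
  have KL : b ≫ T.free.map (diag X.A) ≫ (ξ X.A X.A).inv ≫
        ((ε ≫ b) ⊗ₘ 𝟙 (T.free.obj X.A)) =
      b ≫ T.free.map (diag X.A) ≫ (ξ X.A X.A).inv := by
    have eA1 : diag X.A ≫ prod.map (Y := T.obj X.A) bf (𝟙 X.A) =
        CategoryStruct.comp (Y := T.obj X.A) bf
          (prod.lift (𝟙 (T.obj X.A)) X.a) := by
      apply Limits.prod.hom_ext <;> simp [hba, hηa, prod.lift_fst, prod.lift_snd, prod.lift_fst_assoc, prod.lift_snd_assoc]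
    have eA2 : CategoryStruct.comp (Y := T.obj X.A) (η')
          (prod.lift (𝟙 (T.obj X.A)) X.a) =
        diag X.A ≫ prod.map (Y := T.obj X.A) (η') (𝟙 X.A) := by
      apply Limits.prod.hom_ext <;> simp [hba, hηa, prod.lift_fst, prod.lift_snd, prod.lift_fst_assoc, prod.lift_snd_assoc]
    rw [hεb]
    rw [show ((T.free.map (Y := T.obj X.A) bf ≫
          εF) ⊗ₘ 𝟙 (T.free.obj X.A)) =
        (T.free.map (Y := T.obj X.A) bf ⊗ₘ T.free.map (𝟙 X.A)) ≫
          (εF ⊗ₘ 𝟙 (T.free.obj X.A)) from by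
      rw [T.free.map_id, tensorHom_comp_tensorHom, Category.id_comp]]
    rw [reassoc_of% hnat_inv (P' := T.obj X.A) bf (𝟙 X.A)]
    rw [← T.free.map_comp_assoc, eA1, T.free.map_comp_assoc, reassoc_of% hcoassoc,
      ← T.free.map_comp_assoc, eA2, T.free.map_comp_assoc]
    rw [← reassoc_of% hnat_inv (P' := T.obj X.A) (η') (𝟙 X.A)]
    rw [T.free.map_id, tensorHom_comp_tensorHom, htri, Category.id_comp, id_tensorHom_id, Category.comp_id]
  have KR : b ≫ T.free.map (diag X.A) ≫ (ξ X.A X.A).inv ≫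
        (𝟙 (T.free.obj X.A) ⊗ₘ (ε ≫ b)) =
      b ≫ T.free.map (diag X.A) ≫ (ξ X.A X.A).inv := by
    have eA1 : diag X.A ≫ prod.map (Z := T.obj X.A) (𝟙 X.A) bf =
        CategoryStruct.comp (Y := T.obj X.A) bf
          (prod.lift X.a (𝟙 (T.obj X.A))) := by
      apply Limits.prod.hom_ext <;> simp [hba, hηa, prod.lift_fst, prod.lift_snd, prod.lift_fst_assoc, prod.lift_snd_assoc]
    have eA2 : CategoryStruct.comp (Y := T.obj X.A) (η')
          (prod.lift X.a (𝟙 (T.obj X.A))) =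
        diag X.A ≫ prod.map (Z := T.obj X.A) (𝟙 X.A) (η') := by
      apply Limits.prod.hom_ext <;> simp [hba, hηa, prod.lift_fst, prod.lift_snd, prod.lift_fst_assoc, prod.lift_snd_assoc]
    rw [hεb]
    rw [show (𝟙 (T.free.obj X.A) ⊗ₘ (T.free.map (Y := T.obj X.A) bf ≫
          εF)) =
        (T.free.map (𝟙 X.A) ⊗ₘ T.free.map (Y := T.obj X.A) bf) ≫
          (𝟙 (T.free.obj X.A) ⊗ₘ εF) from by
      rw [T.free.map_id, tensorHom_comp_tensorHom, Category.id_comp]]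
    rw [reassoc_of% hnat_inv (Q' := T.obj X.A) (𝟙 X.A) bf]
    rw [← T.free.map_comp_assoc, eA1, T.free.map_comp_assoc, reassoc_of% hcoassoc,
      ← T.free.map_comp_assoc, eA2, T.free.map_comp_assoc]
    rw [← reassoc_of% hnat_inv (Q' := T.obj X.A) (𝟙 X.A) (η')]
    rw [T.free.map_id, tensorHom_comp_tensorHom, htri, Category.comp_id, id_tensorHom_id, Category.comp_id]
  -- whiskered versions
  have KL' : ∀ {Z Z' : T.Algebra} (W : T.free.obj X.A ⟶ Z) (h : T.free.obj X.A ⟶ Z'),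
      b ≫ T.free.map (diag X.A) ≫ (ξ X.A X.A).inv ≫
          ((ε ≫ b ≫ W) ⊗ₘ h) =
      b ≫ T.free.map (diag X.A) ≫ (ξ X.A X.A).inv ≫ (W ⊗ₘ h) := by
    intro Z Z' W h
    rw [show ((ε ≫ b ≫ W) ⊗ₘ h) =
        ((ε ≫ b) ⊗ₘ 𝟙 (T.free.obj X.A)) ≫ (W ⊗ₘ h) from by
      simp only [tensorHom_comp_tensorHom, Category.id_comp, Category.assoc]]
    rw [reassoc_of% KL]
  have KR' : ∀ {Z Z' : T.Algebra} (W : T.free.obj X.A ⟶ Z) (h : T.free.obj X.A ⟶ Z'),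
      b ≫ T.free.map (diag X.A) ≫ (ξ X.A X.A).inv ≫
          (h ⊗ₘ (ε ≫ b ≫ W)) =
      b ≫ T.free.map (diag X.A) ≫ (ξ X.A X.A).inv ≫ (h ⊗ₘ W) := by
    intro Z Z' W h
    rw [show (h ⊗ₘ (ε ≫ b ≫ W)) =
        (𝟙 (T.free.obj X.A) ⊗ₘ (ε ≫ b)) ≫ (h ⊗ₘ W) from by
      simp only [tensorHom_comp_tensorHom, Category.id_comp, Category.assoc]]
    rw [reassoc_of% KR]
  -- the four comonoid laws
  have G1 : (b ≫ T.free.map (diag X.A) ≫ (ξ X.A X.A).inv ≫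
        (ε ⊗ₘ ε)) ≫
      ((b ≫ T.free.map (terminal.from X.A) ≫ ι.inv) ⊗ₘ 𝟙 X) = (λ_ X).inv := by
    rw [Category.assoc, Category.assoc, Category.assoc, tensorHom_comp_tensorHom, hcid]
    rw [KL' (T.free.map (terminal.from X.A) ≫ ι.inv) (ε)]
    rw [show ((T.free.map (terminal.from X.A) ≫ ι.inv) ⊗ₘ ε) =
        (T.free.map (terminal.from X.A) ⊗ₘ T.free.map (𝟙 X.A)) ≫
          (ι.inv ⊗ₘ 𝟙 (T.free.obj X.A)) ≫ (𝟙 (𝟙_ T.Algebra) ⊗ₘ ε) from by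
      rw [T.free.map_id, tensorHom_comp_tensorHom, tensorHom_comp_tensorHom, Category.comp_id, Category.id_comp,
        Category.id_comp]]
    rw [reassoc_of% hnat_inv (terminal.from X.A) (𝟙 X.A),
      reassoc_of% hleft_inv X.A]
    rw [← T.free.map_comp_assoc, ← T.free.map_comp_assoc]
    rw [show (diag X.A ≫ prod.map (terminal.from X.A) (𝟙 X.A)) ≫
        (prod.leftUnitor X.A).hom = 𝟙 X.A from by simp [prod.lift_fst, prod.lift_snd, prod.lift_fst_assoc, prod.lift_snd_assoc]]
    have hfin1 : CategoryStruct.comp (Y := T.free.obj X.A) b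
        (T.free.map (𝟙 X.A) ≫ (λ_ (T.free.obj X.A)).inv ≫
          (𝟙 (𝟙_ T.Algebra) ⊗ₘ ε)) = (λ_ X).inv := by
      rw [T.free.map_id, Category.id_comp, id_tensorHom, ← leftUnitor_inv_naturality,
        ← Category.assoc, hcounitFx, Category.id_comp]
    exact hfin1
  have G2 : (b ≫ T.free.map (diag X.A) ≫ (ξ X.A X.A).inv ≫
        (ε ⊗ₘ ε)) ≫
      (𝟙 X ⊗ₘ (b ≫ T.free.map (terminal.from X.A) ≫ ι.inv)) = (ρ_ X).inv := by
    rw [Category.assoc, Category.assoc, Category.assoc, tensorHom_comp_tensorHom, hcid]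
    rw [KR' (T.free.map (terminal.from X.A) ≫ ι.inv) (ε)]
    rw [show (ε ⊗ₘ (T.free.map (terminal.from X.A) ≫ ι.inv)) =
        (T.free.map (𝟙 X.A) ⊗ₘ T.free.map (terminal.from X.A)) ≫
          (𝟙 (T.free.obj X.A) ⊗ₘ ι.inv) ≫ (ε ⊗ₘ 𝟙 (𝟙_ T.Algebra)) from by
      rw [T.free.map_id, tensorHom_comp_tensorHom, tensorHom_comp_tensorHom, Category.comp_id, Category.id_comp,
        Category.id_comp]]
    rw [reassoc_of% hnat_inv (𝟙 X.A) (terminal.from X.A),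
      reassoc_of% hright_inv X.A]
    rw [← T.free.map_comp_assoc, ← T.free.map_comp_assoc]
    rw [show (diag X.A ≫ prod.map (𝟙 X.A) (terminal.from X.A)) ≫
        (prod.rightUnitor X.A).hom = 𝟙 X.A from by simp [prod.lift_fst, prod.lift_snd, prod.lift_fst_assoc, prod.lift_snd_assoc]]
    have hfin2 : CategoryStruct.comp (Y := T.free.obj X.A) b
        (T.free.map (𝟙 X.A) ≫ (ρ_ (T.free.obj X.A)).inv ≫
          (ε ⊗ₘ 𝟙 (𝟙_ T.Algebra))) = (ρ_ X).inv := by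
      rw [T.free.map_id, Category.id_comp, tensorHom_id, ← rightUnitor_inv_naturality,
        ← Category.assoc, hcounitFx, Category.id_comp]
    exact hfin2
  have G3 : (b ≫ T.free.map (diag X.A) ≫ (ξ X.A X.A).inv ≫
        (ε ⊗ₘ ε)) ≫
      ((b ≫ T.free.map (diag X.A) ≫ (ξ X.A X.A).inv ≫
        (ε ⊗ₘ ε)) ⊗ₘ 𝟙 X) ≫
      (α_ X X X).hom =
      (b ≫ T.free.map (diag X.A) ≫ (ξ X.A X.A).inv ≫
        (ε ⊗ₘ ε)) ≫
      (𝟙 X ⊗ₘ (b ≫ T.free.map (diag X.A) ≫ (ξ X.A X.A).inv ≫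
        (ε ⊗ₘ ε))) := by
    have eA3 : diag X.A ≫ prod.map (diag X.A) (𝟙 X.A) ≫
        (prod.associator X.A X.A X.A).hom =
        diag X.A ≫ prod.map (𝟙 X.A) (diag X.A) := by
      apply Limits.prod.hom_ext
      · simp [prod.lift_fst, prod.lift_snd, prod.lift_fst_assoc, prod.lift_snd_assoc]
      · apply Limits.prod.hom_ext <;> simp [prod.lift_fst, prod.lift_snd, prod.lift_fst_assoc, prod.lift_snd_assoc]
    have hαnat : ((ε ⊗ₘ ε) ⊗ₘ ε) ≫
        (α_ X X X).hom =
        (α_ (T.free.obj X.A) (T.free.obj X.A) (T.free.obj X.A)).hom ≫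
          (ε ⊗ₘ (ε ⊗ₘ ε)) :=
      associator_naturality _ _ _
    have L3 : (b ≫ T.free.map (diag X.A) ≫ (ξ X.A X.A).inv ≫
          (ε ⊗ₘ ε)) ≫
        ((b ≫ T.free.map (diag X.A) ≫ (ξ X.A X.A).inv ≫
          (ε ⊗ₘ ε)) ⊗ₘ 𝟙 X) ≫
        (α_ X X X).hom =
        b ≫ T.free.map (diag X.A ≫ prod.map (diag X.A) (𝟙 X.A) ≫
            (prod.associator X.A X.A X.A).hom) ≫
          (ξ X.A (X.A ⨯ X.A)).inv ≫
          (𝟙 (T.free.obj X.A) ⊗ₘ (ξ X.A X.A).inv) ≫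
          (ε ⊗ₘ (ε ⊗ₘ ε)) := by
      rw [Category.assoc, Category.assoc, Category.assoc, tensorHom_comp_tensorHom_assoc, hcid]
      rw [reassoc_of% KL' (T.free.map (diag X.A) ≫ (ξ X.A X.A).inv ≫
          (ε ⊗ₘ ε)) (ε)]
      rw [show ((T.free.map (diag X.A) ≫ (ξ X.A X.A).inv ≫
            (ε ⊗ₘ ε)) ⊗ₘ ε) =
          (T.free.map (diag X.A) ⊗ₘ T.free.map (𝟙 X.A)) ≫
            ((ξ X.A X.A).inv ⊗ₘ 𝟙 (T.free.obj X.A)) ≫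
            ((ε ⊗ₘ ε) ⊗ₘ ε) from by
        rw [T.free.map_id, tensorHom_comp_tensorHom, tensorHom_comp_tensorHom, Category.id_comp, Category.id_comp]]
      simp only [Category.assoc]
      rw [reassoc_of% hnat_inv (diag X.A) (𝟙 X.A)]
      rw [hαnat]
      rw [reassoc_of% hassoc_inv X.A X.A X.A]
      rw [← T.free.map_comp_assoc, ← T.free.map_comp_assoc]
      simp only [Category.assoc]
    have R3 : (b ≫ T.free.map (diag X.A) ≫ (ξ X.A X.A).inv ≫
          (ε ⊗ₘ ε)) ≫
        (𝟙 X ⊗ₘ (b ≫ T.free.map (diag X.A) ≫ (ξ X.A X.A).inv ≫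
          (ε ⊗ₘ ε))) =
        b ≫ T.free.map (diag X.A ≫ prod.map (𝟙 X.A) (diag X.A)) ≫
          (ξ X.A (X.A ⨯ X.A)).inv ≫
          (𝟙 (T.free.obj X.A) ⊗ₘ (ξ X.A X.A).inv) ≫
          (ε ⊗ₘ (ε ⊗ₘ ε)) := by
      rw [Category.assoc, Category.assoc, Category.assoc, tensorHom_comp_tensorHom, hcid]
      rw [KR' (T.free.map (diag X.A) ≫ (ξ X.A X.A).inv ≫
          (ε ⊗ₘ ε)) (ε)]
      rw [show (ε ⊗ₘ (T.free.map (diag X.A) ≫ (ξ X.A X.A).inv ≫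
            (ε ⊗ₘ ε))) =
          (T.free.map (𝟙 X.A) ⊗ₘ T.free.map (diag X.A)) ≫
            (𝟙 (T.free.obj X.A) ⊗ₘ (ξ X.A X.A).inv) ≫
            (ε ⊗ₘ (ε ⊗ₘ ε)) from by
        rw [T.free.map_id, tensorHom_comp_tensorHom, tensorHom_comp_tensorHom, Category.id_comp, Category.id_comp]]
      rw [reassoc_of% hnat_inv (𝟙 X.A) (diag X.A)]
      rw [← T.free.map_comp_assoc]
    rw [L3, R3, eA3]
  have G4 : (b ≫ T.free.map (diag X.A) ≫ (ξ X.A X.A).inv ≫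
        (ε ⊗ₘ ε)) ≫ (β_ X X).hom =
      b ≫ T.free.map (diag X.A) ≫ (ξ X.A X.A).inv ≫
        (ε ⊗ₘ ε) := by
    have hβnat : (ε ⊗ₘ ε) ≫ (β_ X X).hom =
        (β_ (T.free.obj X.A) (T.free.obj X.A)).hom ≫
          (ε ⊗ₘ ε) :=
      BraidedCategory.braiding_naturality _ _
    rw [Category.assoc, Category.assoc, Category.assoc, hβnat]
    rw [reassoc_of% hsymm_inv X.A X.A]
    rw [← T.free.map_comp_assoc]
    rw [show diag X.A ≫ (prod.braiding X.A X.A).hom = diag X.A from by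
      apply Limits.prod.hom_ext <;> simp [prod.lift_fst, prod.lift_snd, prod.lift_fst_assoc, prod.lift_snd_assoc]]
  exact ⟨G1, G2, G3, G4⟩


set_option maxHeartbeats 1000000 in
/-- Let `T` be a (commutative) monad on a cartesian category `A` such that the
Eilenberg–Moore category `Alg(T)` is symmetric monoidal with the free functor strong
monoidal, via `ξ : TX ⊗ TY ≅ T(X × Y)` (natural and coherent with the unitors,
associator and braiding) and `ι : I ≅ T(1)`. Then every `T̄`-coalgebra `C` (a basis,
with structure map `b = C.a` on the algebra `C.A`) induces a commutative comonoid
structure on `C.A` in `Alg(T)`, with counit `u_b = ι⁻¹ ∘ T(!) ∘ b` and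
comultiplication `d_b = (a ⊗ a) ∘ ξ⁻¹ ∘ T(Δ) ∘ b`; in particular the counit law
`(u_b ⊗ id) ∘ d_b = λ⁻¹` holds. -/
theorem bases_as_coalgebras_stmt18 {A : Type u} [Category.{v} A]
    [HasFiniteProducts A] (T : Monad A)
    [MonoidalCategory T.Algebra] [SymmetricCategory T.Algebra]
    -- the free functor is strong (symmetric) monoidal:
    (ξ : ∀ P Q : A, T.free.obj P ⊗ T.free.obj Q ≅ T.free.obj (P ⨯ Q))
    (ι : 𝟙_ T.Algebra ≅ T.free.obj (⊤_ A))
    (hnat : ∀ {P P' Q Q' : A} (f : P ⟶ P') (g : Q ⟶ Q'),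
      (T.free.map f ⊗ₘ T.free.map g) ≫ (ξ P' Q').hom =
        (ξ P Q).hom ≫ T.free.map (prod.map f g))
    (hleft : ∀ P : A,
      (ι.hom ⊗ₘ 𝟙 (T.free.obj P)) ≫ (ξ (⊤_ A) P).hom =
        (λ_ (T.free.obj P)).hom ≫ T.free.map (prod.leftUnitor P).inv)
    (hright : ∀ P : A,
      (𝟙 (T.free.obj P) ⊗ₘ ι.hom) ≫ (ξ P (⊤_ A)).hom =
        (ρ_ (T.free.obj P)).hom ≫ T.free.map (prod.rightUnitor P).inv)
    (hassoc : ∀ P Q R : A,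
      ((ξ P Q).hom ⊗ₘ 𝟙 (T.free.obj R)) ≫ (ξ (P ⨯ Q) R).hom ≫
          T.free.map (prod.associator P Q R).hom =
        (α_ (T.free.obj P) (T.free.obj Q) (T.free.obj R)).hom ≫
          (𝟙 (T.free.obj P) ⊗ₘ (ξ Q R).hom) ≫ (ξ P (Q ⨯ R)).hom)
    (hsymm : ∀ P Q : A,
      (β_ (T.free.obj P) (T.free.obj Q)).hom ≫ (ξ Q P).hom =
        (ξ P Q).hom ≫ T.free.map (prod.braiding P Q).hom)
    -- a basis: a coalgebra for the induced comonad `T̄ = FU` on `Alg(T)`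
    (C : Comonad.Coalgebra T.adj.toComonad) :
    letI d : C.A ⟶ C.A ⊗ C.A :=
      C.a ≫ T.free.map (diag C.A.A) ≫ (ξ C.A.A C.A.A).inv ≫
        (T.adj.counit.app C.A ⊗ₘ T.adj.counit.app C.A)
    letI u : C.A ⟶ 𝟙_ T.Algebra :=
      C.a ≫ T.free.map (terminal.from C.A.A) ≫ ι.inv
    -- commutative comonoid laws
    (d ≫ (u ⊗ₘ 𝟙 C.A) = (λ_ C.A).inv) ∧
    (d ≫ (𝟙 C.A ⊗ₘ u) = (ρ_ C.A).inv) ∧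
    (d ≫ (d ⊗ₘ 𝟙 C.A) ≫ (α_ C.A C.A C.A).hom = d ≫ (𝟙 C.A ⊗ₘ d)) ∧
    (d ≫ (β_ C.A C.A).hom = d) := by
  -- basic facts about the coalgebra (all definitional reformulations)
  have hcounit : C.a ≫ T.adj.counit.app C.A = 𝟙 C.A := C.counit
  have hcoassoc : C.a ≫ T.free.map (Y := T.obj C.A.A) C.a.f =
      C.a ≫ T.free.map (Y := T.obj C.A.A) (T.adj.unit.app C.A.A) :=
    C.coassoc.symm
  have hba : CategoryStruct.comp (Y := T.obj C.A.A) C.a.f C.A.a = 𝟙 C.A.A := by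
    have := congrArg Monad.Algebra.Hom.f C.counit
    simp only [Monad.Algebra.comp_f, Monad.Algebra.id_f] at this
    simp [Monad.adj] at this
    erw [Category.id_comp] at this
    exact this
  have hηa : CategoryStruct.comp (Y := T.obj C.A.A) (T.adj.unit.app C.A.A) C.A.a = 𝟙 C.A.A := by
    simpa using C.A.unit
  have hηa2 : CategoryStruct.comp (Y := T.obj C.A.A) (T.η.app C.A.A) C.A.a = 𝟙 C.A.A :=
    C.A.unit
  have hεb : T.adj.counit.app C.A ≫ C.a =
      T.free.map (Y := T.obj C.A.A) C.a.f ≫ T.adj.counit.app (T.free.obj C.A.A) :=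
    (T.adj.counit.naturality C.a).symm
  have htri : T.free.map (Y := T.obj C.A.A) (T.adj.unit.app C.A.A) ≫
      T.adj.counit.app (T.free.obj C.A.A) = 𝟙 (T.free.obj C.A.A) :=
    T.adj.left_triangle_components C.A.A
  have hcid : CategoryStruct.comp (Y := (𝟭 T.Algebra).obj C.A) (T.adj.counit.app C.A)
      (𝟙 C.A) = T.adj.counit.app C.A := Category.comp_id _
  have hcounitFx : CategoryStruct.comp (Y := T.free.obj C.A.A) C.a
      (T.adj.counit.app C.A) = 𝟙 C.A := hcounit
  exact bases_as_coalgebras_aux T ξ ι hnat hleft hright hassoc hsymm C.A C.a C.a.f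
    (T.adj.unit.app C.A.A) (T.adj.counit.app C.A) (T.adj.counit.app (T.free.obj C.A.A))
    hcounit hcoassoc hba hηa hεb htri
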